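/- Let X be a nonempty closed L-pseudo-Lipschitz subset of the pseudo-Euclidean space ℝ_{(l,p)} with L < 1. Then for every a ∈ ℝ^n the set m(a) is nonempty and compact; in particular the vacant axis W_X is empty. -/

import Mathlib

open Filter Topology Set

noncomputable section

/-- The pseudo-Euclidean space `ℝ_{(l,p)}`: `ℝ^(l+p)` with the Euclidean topology. -/
abbrev PE (l p : ℕ) := EuclideanSpace ℝ (Fin (l + p))

/-- The quadratic form `Q(x) = ‖x‖_l² − ‖x‖_p²`. -/
def Q (l p : ℕ) (x : PE l p) : ℝ :=
  ∑ i : Fin (l + p), if (i : ℕ) < l then (x i) ^ 2 else -((x i) ^ 2)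

/-- The pseudo-scalar product `⟪x,y⟫ = Σ_{i<l} x_i y_i − Σ_{i≥l} x_i y_i`. -/
def pseudoInner (l p : ℕ) (x y : PE l p) : ℝ :=
  ∑ i : Fin (l + p), if (i : ℕ) < l then x i * y i else -(x i * y i)

/-- `‖x‖_l`: the Euclidean norm of the first `l` coordinates. -/
def normL (l p : ℕ) (x : PE l p) : ℝ :=
  Real.sqrt (∑ i : Fin (l + p), if (i : ℕ) < l then (x i) ^ 2 else 0)

/-- `‖x‖_p`: the Euclidean norm of the last `p` coordinates. -/
def normP (l p : ℕ) (x : PE l p) : ℝ :=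
  Real.sqrt (∑ i : Fin (l + p), if (i : ℕ) < l then 0 else (x i) ^ 2)

/-- `X` is acausal: `Q(x−y) > 0` for all distinct `x, y ∈ X`. -/
def Acausal (l p : ℕ) (X : Set (PE l p)) : Prop :=
  ∀ x ∈ X, ∀ y ∈ X, x ≠ y → 0 < Q l p (x - y)

/-- `X` is `L`-pseudo-Lipschitz: `L‖x−y‖_l ≥ ‖x−y‖_p` for all `x, y ∈ X`. -/
def PseudoLipschitz (l p : ℕ) (L : ℝ) (X : Set (PE l p)) : Prop :=
  ∀ x ∈ X, ∀ y ∈ X, normP l p (x - y) ≤ L * normL l p (x - y)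

/-- The squared-distance function `ρ(a,X) = inf {Q(x−a) : x ∈ X}`. -/
def rho (l p : ℕ) (X : Set (PE l p)) (a : PE l p) : ℝ :=
  sInf ((fun x => Q l p (x - a)) '' X)

/-- The set of closest points `m(a) = {x ∈ X : Q(x−a) = ρ(a,X)}`, via its equivalent
description `m(a) = {x ∈ X : ∀ b ∈ X, Q(x−a) ≤ Q(b−a)}`. -/
def mm (l p : ℕ) (X : Set (PE l p)) (a : PE l p) : Set (PE l p) :=
  {x ∈ X | ∀ b ∈ X, Q l p (x - a) ≤ Q l p (b - a)}

/-- The medial axis `M_X`: points with at least two closest points in `X`. -/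
def medialAxis (l p : ℕ) (X : Set (PE l p)) : Set (PE l p) :=
  {a | (mm l p X a).Nontrivial}

/-- The vacant axis `W_X`: points with no closest point in `X`. -/
def vacantAxis (l p : ℕ) (X : Set (PE l p)) : Set (PE l p) :=
  {a | mm l p X a = ∅}

/-- The normal set `N(a) = {x : a ∈ m(x)}`. -/
def NN (l p : ℕ) (X : Set (PE l p)) (a : PE l p) : Set (PE l p) :=
  {x | a ∈ mm l p X x}

/-- The strict normal set `N'(a) = {x : m(x) = {a}}`. -/
def NN' (l p : ℕ) (X : Set (PE l p)) (a : PE l p) : Set (PE l p) :=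
  {x | mm l p X x = {a}}

namespace MAux

variable (l p : ℕ)

def S (x : PE l p) : ℝ := ∑ i, (x i) ^ 2
def SL (x : PE l p) : ℝ := ∑ i : Fin (l + p), if (i : ℕ) < l then (x i) ^ 2 else 0
def SP (x : PE l p) : ℝ := ∑ i : Fin (l + p), if (i : ℕ) < l then 0 else (x i) ^ 2

lemma SL_nonneg (x : PE l p) : 0 ≤ SL l p x :=
  Finset.sum_nonneg fun i _ => by split_ifs <;> positivity

lemma SP_nonneg (x : PE l p) : 0 ≤ SP l p x :=
  Finset.sum_nonneg fun i _ => by split_ifs <;> positivity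

lemma S_nonneg (x : PE l p) : 0 ≤ S l p x :=
  Finset.sum_nonneg fun i _ => by positivity

lemma Q_eq (x : PE l p) : Q l p x = SL l p x - SP l p x := by
  rw [Q, SL, SP, ← Finset.sum_sub_distrib]
  exact Finset.sum_congr rfl fun i _ => by split_ifs <;> ring

lemma S_decomp (x : PE l p) : S l p x = SL l p x + SP l p x := by
  rw [S, SL, SP, ← Finset.sum_add_distrib]
  exact Finset.sum_congr rfl fun i _ => by split_ifs <;> ring

lemma S_eq_normsq (x : PE l p) : S l p x = ‖x‖ ^ 2 := by
  rw [EuclideanSpace.norm_eq, Real.sq_sqrt (by positivity)]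
  exact Finset.sum_congr rfl fun i _ => by rw [Real.norm_eq_abs, sq_abs]

lemma Q_add (u v : PE l p) :
    Q l p (u + v) = Q l p u + 2 * pseudoInner l p u v + Q l p v := by
  simp only [Q, pseudoInner, PiLp.add_apply, Finset.mul_sum,
    ← Finset.sum_add_distrib]
  exact Finset.sum_congr rfl fun i _ => by split_ifs <;> ring

lemma pI_sq_le (u v : PE l p) :
    (pseudoInner l p u v) ^ 2 ≤ S l p u * S l p v := by
  have h1 : pseudoInner l p u v
      = ∑ i : Fin (l+p), (if (i : ℕ) < l then u i else -(u i)) * v i :=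
    Finset.sum_congr rfl fun i _ => by split_ifs <;> ring
  have h2 : S l p u = ∑ i : Fin (l+p), (if (i : ℕ) < l then u i else -(u i)) ^ 2 :=
    Finset.sum_congr rfl fun i _ => by split_ifs <;> ring
  rw [h1, h2, S]
  exact Finset.sum_mul_sq_le_sq_mul_sq _ _ _

lemma Q_cont : Continuous (Q l p) := by
  unfold Q
  refine continuous_finset_sum _ fun i _ => ?_
  have hx : Continuous fun x : PE l p => x i := PiLp.continuous_apply 2 _ i
  by_cases h : (i : ℕ) < l <;> simp only [h, if_true, if_false] <;> fun_prop

end MAux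

set_option maxHeartbeats 1000000 in
theorem m_nonempty_compact (l p : ℕ) (hl : 1 ≤ l) (L : ℝ) (hL : L < 1)
    (X : Set (PE l p)) (hne : X.Nonempty) (hX : IsClosed X)
    (hlip : PseudoLipschitz l p L X) :
    (∀ a : PE l p, (mm l p X a).Nonempty ∧ IsCompact (mm l p X a)) ∧
    vacantAxis l p X = ∅ := by
  set L₀ : ℝ := max L 0 with hL₀def
  have hL₀0 : 0 ≤ L₀ := le_max_right _ _
  have hL₀1 : L₀ < 1 := max_lt hL (by norm_num)
  set t : ℝ := L₀ ^ 2 with htdef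
  have ht0 : 0 ≤ t := sq_nonneg _
  have ht1 : t < 1 := by nlinarith
  set c : ℝ := (1 - t) / (1 + t) with hcdef
  have h1t : (0:ℝ) < 1 + t := by linarith
  have hc : 0 < c := div_pos (by linarith) h1t
  have hc' : c * (1 + t) = 1 - t := div_mul_cancel₀ _ (ne_of_gt h1t)
  -- key Lipschitz consequence
  have key : ∀ x ∈ X, ∀ y ∈ X, c * MAux.S l p (x - y) ≤ Q l p (x - y) := by
    intro x hx y hy
    have h := hlip x hx y hy
    have hLle : L * normL l p (x - y) ≤ L₀ * normL l p (x - y) :=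
      mul_le_mul_of_nonneg_right (le_max_left _ _) (Real.sqrt_nonneg _)
    have h' : normP l p (x - y) ≤ L₀ * normL l p (x - y) := h.trans hLle
    have hsq : normP l p (x - y) ^ 2 ≤ (L₀ * normL l p (x - y)) ^ 2 :=
      pow_le_pow_left₀ (Real.sqrt_nonneg _) h' 2
    have hP : (normP l p (x - y)) ^ 2 = MAux.SP l p (x - y) :=
      Real.sq_sqrt (MAux.SP_nonneg l p _)
    have hNL : (normL l p (x - y)) ^ 2 = MAux.SL l p (x - y) :=
      Real.sq_sqrt (MAux.SL_nonneg l p _)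
    have hQL : (L₀ * normL l p (x - y)) ^ 2 = t * MAux.SL l p (x - y) := by
      rw [mul_pow, hNL]
    rw [hP, hQL] at hsq
    have hSL := MAux.SL_nonneg l p (x - y)
    have hSP := MAux.SP_nonneg l p (x - y)
    have hmul : c * MAux.SP l p (x - y) ≤ c * (t * MAux.SL l p (x - y)) :=
      mul_le_mul_of_nonneg_left hsq hc.le
    rw [MAux.Q_eq, MAux.S_decomp]
    nlinarith [hmul, hsq, hc']
  set ε : ℝ := c / 2 with hεdef
  have hε : 0 < ε := by positivity
  obtain ⟨x₀, hx₀⟩ := hne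
  have main : ∀ a : PE l p, (mm l p X a).Nonempty ∧ IsCompact (mm l p X a) := by
    intro a
    set f : PE l p → ℝ := fun x => Q l p (x - a) with hfdef
    have hfc : Continuous f := (MAux.Q_cont l p).comp (continuous_id.sub continuous_const)
    set K : ℝ := f x₀ with hKdef
    set B : ℝ := (1 / ε) * MAux.S l p (x₀ - a) with hBdef
    -- coercivity lower bound
    have lower : ∀ x ∈ X, ε * MAux.S l p (x - x₀) - B + K ≤ f x := by
      intro x hx
      have hdec : f x = Q l p (x - x₀) + 2 * pseudoInner l p (x - x₀) (x₀ - a) + K := by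
        have hxa : x - a = (x - x₀) + (x₀ - a) := by abel
        rw [hfdef]
        simp only
        rw [hxa, MAux.Q_add]
      have hQ := key x hx x₀ hx₀
      have hCS := MAux.pI_sq_le l p (x - x₀) (x₀ - a)
      have hSu := MAux.S_nonneg l p (x - x₀)
      have hSv := MAux.S_nonneg l p (x₀ - a)
      set pI := pseudoInner l p (x - x₀) (x₀ - a)
      have hCS2 : 4 * ε ^ 2 * pI ^ 2 ≤ 4 * ε ^ 2 * (MAux.S l p (x - x₀) * MAux.S l p (x₀ - a)) :=
        mul_le_mul_of_nonneg_left hCS (by positivity)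
      have h4 : (2 * ε * pI) ^ 2 ≤ (ε ^ 2 * MAux.S l p (x - x₀) + MAux.S l p (x₀ - a)) ^ 2 := by
        nlinarith [hCS2, sq_nonneg (ε ^ 2 * MAux.S l p (x - x₀) - MAux.S l p (x₀ - a))]
      have h5 : 0 ≤ ε ^ 2 * MAux.S l p (x - x₀) + MAux.S l p (x₀ - a) := by
        have := sq_nonneg ε
        nlinarith [hSu, hSv]
      have hstep : -(ε ^ 2 * MAux.S l p (x - x₀) + MAux.S l p (x₀ - a)) ≤ 2 * ε * pI := by
        nlinarith [h4, h5]
      rw [hdec]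
      have hBε : ε * B = MAux.S l p (x₀ - a) := by
        rw [hBdef]; field_simp
      have hcε : c = 2 * ε := by rw [hεdef]; ring
      -- want : ε * Su - B + K ≤ Q(x-x₀) + 2 pI + K, using Q(x-x₀) ≥ 2ε Su
      rw [hcε] at hQ
      nlinarith [hstep, hQ, hε, hBε]
    have hB0 : 0 ≤ B := by
      rw [hBdef]
      exact mul_nonneg (by positivity) (MAux.S_nonneg l p _)
    set R : ℝ := Real.sqrt (B / ε) with hRdef
    have hball : ∀ x ∈ X, f x ≤ K → x ∈ Metric.closedBall x₀ R := by
      intro x hx hfx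
      have h1 := lower x hx
      have h2 : MAux.S l p (x - x₀) ≤ B / ε := by
        rw [le_div_iff₀ hε]; nlinarith [h1, hfx]
      have h3 : ‖x - x₀‖ ≤ R := by
        have : ‖x - x₀‖ = Real.sqrt (MAux.S l p (x - x₀)) := by
          rw [MAux.S_eq_normsq, Real.sqrt_sq (norm_nonneg _)]
        rw [this, hRdef]
        exact Real.sqrt_le_sqrt h2
      simpa [Metric.mem_closedBall, dist_eq_norm] using h3
    have hR0 : 0 ≤ R := Real.sqrt_nonneg _
    set T : Set (PE l p) := X ∩ Metric.closedBall x₀ R with hTdef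
    have hTcomp : IsCompact T := (isCompact_closedBall x₀ R).inter_left hX
    have hx₀T : x₀ ∈ T := ⟨hx₀, Metric.mem_closedBall_self hR0⟩
    obtain ⟨xb, hxbT, hxbmin⟩ := hTcomp.exists_isMinOn ⟨x₀, hx₀T⟩ hfc.continuousOn
    have hxbK : f xb ≤ K := hxbmin hx₀T
    have hxbmm : xb ∈ mm l p X a := by
      refine ⟨hxbT.1, fun b hb => ?_⟩
      by_cases hbK : f b ≤ K
      · exact hxbmin ⟨hb, hball b hb hbK⟩
      · exact hxbK.trans (le_of_not_ge hbK)
    refine ⟨⟨xb, hxbmm⟩, ?_⟩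
    -- compactness of mm
    have hsub : mm l p X a ⊆ T := by
      intro x hx
      exact ⟨hx.1, hball x hx.1 (hx.2 x₀ hx₀)⟩
    have hclosed : IsClosed (mm l p X a) := by
      have : mm l p X a = X ∩ ⋂ b ∈ X, {x | f x ≤ f b} := by
        ext x
        simp [mm, Set.mem_iInter, hfdef]
      rw [this]
      exact hX.inter (isClosed_biInter fun b _ => isClosed_le hfc continuous_const)
    exact hTcomp.of_isClosed_subset hclosed hsub
  refine ⟨main, ?_⟩
  rw [Set.eq_empty_iff_forall_notMem]
  intro a ha
  exact absurd ((main a).1.ne_empty) (not_not.mpr ha)
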